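/- If a Banach space X does not have the L-Dunford-Pettis property, then the space W(X, ℓ∞) of weakly compact operators from X into ℓ∞ is not complemented in the space DPcc(X, ℓ∞) of Dunford-Pettis completely continuous operators from X into ℓ∞. -/

import Mathlib

open Filter Topology Metric

set_option maxHeartbeats 1000000

noncomputable section

instance : Fact ((1:ENNReal) ≤ ⊤) := ⟨le_top⟩

/-- A sequence is weakly null if every continuous linear functional sends it to a null
sequence. -/
def WeaklyNull {X : Type*} [NormedAddCommGroup X] [NormedSpace ℝ X] (x : ℕ → X) : Prop :=
  ∀ f : X →L[ℝ] ℝ, Tendsto (fun n => f (x n)) atTop (𝓝 0)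

/-- A sequence of functionals is weak*-null if it tends to zero pointwise. -/
def WeakStarNull {X : Type*} [NormedAddCommGroup X] [NormedSpace ℝ X]
    (f : ℕ → X →L[ℝ] ℝ) : Prop :=
  ∀ x : X, Tendsto (fun n => f n x) atTop (𝓝 0)

/-- A norm bounded set is a Dunford-Pettis set if every weakly null sequence of functionals
converges to zero uniformly on it. -/
def IsDPSet {X : Type*} [NormedAddCommGroup X] [NormedSpace ℝ X] (A : Set X) : Prop :=
  Bornology.IsBounded A ∧
  ∀ f : ℕ → X →L[ℝ] ℝ, WeaklyNull f →
    Tendsto (fun n => ⨆ x : A, |f n (x : X)|) atTop (𝓝 0)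

/-- A norm bounded subset of the dual is an L-set if every weakly null sequence in `X`
converges to zero uniformly on it. -/
def IsLSet {X : Type*} [NormedAddCommGroup X] [NormedSpace ℝ X]
    (A : Set (X →L[ℝ] ℝ)) : Prop :=
  Bornology.IsBounded A ∧
  ∀ x : ℕ → X, WeaklyNull x →
    Tendsto (fun n => ⨆ f : A, |(f : X →L[ℝ] ℝ) (x n)|) atTop (𝓝 0)

/-- A norm bounded subset of the dual is an L-Dunford-Pettis set if every weakly null
sequence in `X` which is a Dunford-Pettis set converges to zero uniformly on it. -/
def IsLDPSet {X : Type*} [NormedAddCommGroup X] [NormedSpace ℝ X]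
    (A : Set (X →L[ℝ] ℝ)) : Prop :=
  Bornology.IsBounded A ∧
  ∀ x : ℕ → X, WeaklyNull x → IsDPSet (Set.range x) →
    Tendsto (fun n => ⨆ f : A, |(f : X →L[ℝ] ℝ) (x n)|) atTop (𝓝 0)

/-- A set is relatively weakly compact if its closure in the weak topology is compact. -/
def RelWeaklyCompact {X : Type*} [NormedAddCommGroup X] [NormedSpace ℝ X]
    (A : Set X) : Prop :=
  IsCompact (closure ((toWeakSpace ℝ X) '' A))

/-- The relatively compact Dunford-Pettis property: every Dunford-Pettis set is
relatively norm compact. -/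
def HasDPrcP (X : Type*) [NormedAddCommGroup X] [NormedSpace ℝ X] : Prop :=
  ∀ A : Set X, IsDPSet A → IsCompact (closure A)

/-- An operator is Dunford-Pettis completely continuous if it maps weakly null sequences
that are Dunford-Pettis sets to norm null sequences. -/
def IsDPcc {X Y : Type*} [NormedAddCommGroup X] [NormedSpace ℝ X]
    [NormedAddCommGroup Y] [NormedSpace ℝ Y] (T : X →L[ℝ] Y) : Prop :=
  ∀ x : ℕ → X, WeaklyNull x → IsDPSet (Set.range x) →
    Tendsto (fun n => ‖T (x n)‖) atTop (𝓝 0)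

/-- An operator is weakly compact if the image of the closed unit ball is relatively
weakly compact. -/
def IsWeaklyCompactOp {X Y : Type*} [NormedAddCommGroup X] [NormedSpace ℝ X]
    [NormedAddCommGroup Y] [NormedSpace ℝ Y] (T : X →L[ℝ] Y) : Prop :=
  RelWeaklyCompact (T '' closedBall 0 1)

/-- The L-Dunford-Pettis property: every L-Dunford-Pettis set in the dual is relatively
weakly compact. -/
def HasLDPProperty (X : Type*) [NormedAddCommGroup X] [NormedSpace ℝ X] : Prop :=
  ∀ A : Set (X →L[ℝ] ℝ), IsLDPSet A → RelWeaklyCompact A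

/-- The Dunford-Pettis property: every relatively weakly compact set is a
Dunford-Pettis set. -/
def HasDPProperty (X : Type*) [NormedAddCommGroup X] [NormedSpace ℝ X] : Prop :=
  ∀ A : Set X, RelWeaklyCompact A → IsDPSet A

/-- Grothendieck space: every weak*-null sequence in the dual is weakly null. -/
def IsGrothendieck (X : Type*) [NormedAddCommGroup X] [NormedSpace ℝ X] : Prop :=
  ∀ f : ℕ → X →L[ℝ] ℝ, WeakStarNull f → WeaklyNull f

/-- The space `ℓ∞` of bounded real sequences. -/
abbrev ellInfty : Type := lp (fun _ : ℕ => ℝ) ⊤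

/-- `W` is complemented in `D` (both sets of operators) if there is a bounded linear
projection from `D` onto `W`. -/
def OpComplementedIn {X Y : Type*} [NormedAddCommGroup X] [NormedSpace ℝ X]
    [NormedAddCommGroup Y] [NormedSpace ℝ Y]
    (W D : Set (X →L[ℝ] Y)) : Prop :=
  ∃ P : (X →L[ℝ] Y) → (X →L[ℝ] Y),
    (∀ T ∈ D, ∀ S ∈ D, P (T + S) = P T + P S) ∧
    (∀ (c : ℝ), ∀ T ∈ D, P (c • T) = c • P T) ∧
    (∃ C : ℝ, ∀ T ∈ D, ‖P T‖ ≤ C * ‖T‖) ∧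
    (∀ T ∈ D, P T ∈ W) ∧
    (∀ T ∈ W, P T = T)

namespace Stmt17

/-- Coordinate functional on ℓ∞. -/
def coordCLM (m : ℕ) : ellInfty →L[ℝ] ℝ :=
  LinearMap.mkContinuous
    { toFun := fun v => v m
      map_add' := by
        intro u v; show (u + v) m = u m + v m; rw [lp.coeFn_add]; rfl
      map_smul' := by
        intro c u; show (c • u) m = c • (u m); rw [lp.coeFn_smul]; rfl }
    1 (fun v => by
      rw [one_mul]
      exact lp.norm_apply_le_norm (by simp : (⊤ : ENNReal) ≠ 0) v m)

@[simp] lemma coordCLM_apply (m : ℕ) (v : ellInfty) : coordCLM m v = v m := rfl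

lemma abs_coord_le (v : ellInfty) (m : ℕ) : |v m| ≤ ‖v‖ :=
  lp.norm_apply_le_norm (by simp : (⊤ : ENNReal) ≠ 0) v m

/-- Indicator of a set of naturals, as an element of ℓ∞. -/
def ind (s : Set ℕ) : ellInfty :=
  ⟨Set.indicator s 1, memℓp_infty ⟨1, by
    rintro x ⟨m, rfl⟩
    by_cases h : m ∈ s
    · simp [Set.indicator_of_mem h]
    · simp [Set.indicator_of_notMem h]⟩⟩

lemma ind_apply (s : Set ℕ) (m : ℕ) : ind s m = Set.indicator s 1 m := rfl

lemma ind_apply_mem {s : Set ℕ} {m : ℕ} (h : m ∈ s) : ind s m = 1 := by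
  simp [ind_apply, Set.indicator_of_mem h]

lemma ind_apply_not_mem {s : Set ℕ} {m : ℕ} (h : m ∉ s) : ind s m = 0 := by
  simp [ind_apply, Set.indicator_of_notMem h]

lemma norm_ind_le (s : Set ℕ) : ‖ind s‖ ≤ 1 := by
  refine lp.norm_le_of_forall_le' 1 (fun m => ?_)
  by_cases h : m ∈ s
  · simp [ind_apply_mem h]
  · simp [ind_apply_not_mem h]

@[simp] lemma ind_empty : ind (∅ : Set ℕ) = 0 := by
  ext m
  have : (0 : ellInfty) m = 0 := rfl
  rw [ind_apply_not_mem (Set.notMem_empty m), this]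

lemma ind_union_disjoint {s t : Set ℕ} (h : Disjoint s t) :
    ind (s ∪ t) = ind s + ind t := by
  ext m
  rw [lp.coeFn_add]
  show Set.indicator (s ∪ t) 1 m = ind s m + ind t m
  rw [Set.indicator_union_of_disjoint h]
  rfl

/-- Ultrafilter limit of the coordinates of an element of ℓ∞. -/
def uLim (U : Ultrafilter ℕ) (v : ellInfty) : ℝ :=
  Classical.choose (IsCompact.ultrafilter_le_nhds (isCompact_Icc (a := -‖v‖) (b := ‖v‖))
    (U.map (fun m => v m)) (by
      rw [Ultrafilter.coe_map, Filter.le_principal_iff, Filter.mem_map]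
      exact Filter.mem_of_superset Filter.univ_mem (fun m _ => by
        have := abs_coord_le v m
        exact Set.mem_Icc.2 ⟨neg_le_of_abs_le this, le_of_abs_le this⟩)))

lemma uLim_spec (U : Ultrafilter ℕ) (v : ellInfty) :
    uLim U v ∈ Set.Icc (-‖v‖) ‖v‖ ∧ Tendsto (fun m => v m) U (𝓝 (uLim U v)) := by
  have h := Classical.choose_spec (IsCompact.ultrafilter_le_nhds
    (isCompact_Icc (a := -‖v‖) (b := ‖v‖)) (U.map (fun m => v m)) (by
      rw [Ultrafilter.coe_map, Filter.le_principal_iff, Filter.mem_map]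
      exact Filter.mem_of_superset Filter.univ_mem (fun m _ => by
        have := abs_coord_le v m
        exact Set.mem_Icc.2 ⟨neg_le_of_abs_le this, le_of_abs_le this⟩)))
  exact ⟨h.1, h.2⟩

lemma uLim_tendsto (U : Ultrafilter ℕ) (v : ellInfty) :
    Tendsto (fun m => v m) U (𝓝 (uLim U v)) := (uLim_spec U v).2

lemma abs_uLim_le (U : Ultrafilter ℕ) (v : ellInfty) : |uLim U v| ≤ ‖v‖ :=
  abs_le.2 ⟨(uLim_spec U v).1.1, (uLim_spec U v).1.2⟩

lemma uLim_eq_of_tendsto {U : Ultrafilter ℕ} {v : ellInfty} {L : ℝ}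
    (h : Tendsto (fun m => v m) U (𝓝 L)) : uLim U v = L :=
  tendsto_nhds_unique (uLim_tendsto U v) h

/-- The ultrafilter-limit functional on ℓ∞. -/
def uLimCLM (U : Ultrafilter ℕ) : ellInfty →L[ℝ] ℝ :=
  LinearMap.mkContinuous
    { toFun := fun v => uLim U v
      map_add' := by
        intro u v
        refine uLim_eq_of_tendsto ?_
        have : (fun m => (u + v) m) = fun m => u m + v m := by
          funext m; rw [lp.coeFn_add]; rfl
        rw [this]
        exact ((uLim_tendsto U u).add (uLim_tendsto U v))
      map_smul' := by
        intro c v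
        refine uLim_eq_of_tendsto ?_
        have : (fun m => (c • v) m) = fun m => c * v m := by
          funext m; rw [lp.coeFn_smul]; rfl
        rw [this]
        simpa using ((uLim_tendsto U v).const_mul c) }
    1 (fun v => by rw [one_mul]; exact abs_uLim_le U v)

@[simp] lemma uLimCLM_apply (U : Ultrafilter ℕ) (v : ellInfty) : uLimCLM U v = uLim U v := rfl

/-- The weak topology on a normed real vector space is T2. -/
instance weakSpace_t2 (E : Type*) [NormedAddCommGroup E] [NormedSpace ℝ E] :
    T2Space (WeakSpace ℝ E) := by
  refine ⟨fun x y hxy => ?_⟩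
  obtain ⟨φ, hφ⟩ := SeparatingDual.exists_separating_of_ne (R := ℝ) (V := E)
    (show ((toWeakSpace ℝ E).symm x : E) ≠ (toWeakSpace ℝ E).symm y from
      fun h => hxy ((toWeakSpace ℝ E).symm.injective h))
  exact separated_by_continuous (WeakBilin.eval_continuous ((topDualPairing ℝ E).flip) φ) hφ


variable {X : Type*} [NormedAddCommGroup X] [NormedSpace ℝ X]

variable {X : Type*} [NormedAddCommGroup X] [NormedSpace ℝ X]

/-- The operator `x ↦ (b m • F m x)ₘ : X → ℓ∞` built from a bounded sequence of
functionals `F` and an element `b` of `ℓ∞`. -/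
def opT (F : ℕ → X →L[ℝ] ℝ) {R : ℝ} (hF : ∀ m, ‖F m‖ ≤ R) (b : ellInfty) :
    X →L[ℝ] ellInfty :=
  LinearMap.mkContinuous
    { toFun := fun x => (⟨fun m => b m * F m x, memℓp_infty ⟨‖b‖ * (R * ‖x‖), by
        rintro t ⟨m, rfl⟩
        have h1 : |F m x| ≤ R * ‖x‖ :=
          le_trans ((F m).le_opNorm x) (mul_le_mul_of_nonneg_right (hF m) (norm_nonneg x))
        show ‖b m * F m x‖ ≤ ‖b‖ * (R * ‖x‖)
        rw [Real.norm_eq_abs, abs_mul]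
        exact mul_le_mul (abs_coord_le b m) h1 (abs_nonneg _) (norm_nonneg b)⟩⟩ : ellInfty)
      map_add' := by
        intro x y
        ext m
        rw [lp.coeFn_add]
        show b m * F m (x + y) = b m * F m x + b m * F m y
        rw [map_add]; ring
      map_smul' := by
        intro c x
        ext m
        rw [lp.coeFn_smul]
        show b m * F m (c • x) = c • (b m * F m x)
        rw [map_smul]
        simp only [smul_eq_mul]
        ring }
    (‖b‖ * R) (fun x => by
      refine lp.norm_le_of_forall_le' _ (fun m => ?_)
      have h1 : |F m x| ≤ R * ‖x‖ :=
        le_trans ((F m).le_opNorm x) (mul_le_mul_of_nonneg_right (hF m) (norm_nonneg x))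
      show ‖b m * F m x‖ ≤ ‖b‖ * R * ‖x‖
      rw [Real.norm_eq_abs, abs_mul, mul_assoc]
      exact mul_le_mul (abs_coord_le b m) h1 (abs_nonneg _) (norm_nonneg b))

lemma opT_apply (F : ℕ → X →L[ℝ] ℝ) {R : ℝ} (hF : ∀ m, ‖F m‖ ≤ R) (b : ellInfty)
    (x : X) (m : ℕ) : (opT F hF b x) m = b m * F m x := rfl

lemma opT_norm_le (F : ℕ → X →L[ℝ] ℝ) {R : ℝ} (hF : ∀ m, ‖F m‖ ≤ R) (b : ellInfty) :
    ‖opT F hF b‖ ≤ ‖b‖ * R :=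
  LinearMap.mkContinuous_norm_le _ (mul_nonneg (norm_nonneg b)
    ((norm_nonneg (F 0)).trans (hF 0))) _

lemma opT_add (F : ℕ → X →L[ℝ] ℝ) {R : ℝ} (hF : ∀ m, ‖F m‖ ≤ R) (b b' : ellInfty) :
    opT F hF (b + b') = opT F hF b + opT F hF b' := by
  refine ContinuousLinearMap.ext (fun x => ?_)
  ext m
  rw [ContinuousLinearMap.add_apply, lp.coeFn_add]
  show (b + b') m * F m x = (opT F hF b x) m + (opT F hF b' x) m
  rw [lp.coeFn_add, opT_apply, opT_apply]
  show (b m + b' m) * F m x = _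
  ring

lemma opT_neg (F : ℕ → X →L[ℝ] ℝ) {R : ℝ} (hF : ∀ m, ‖F m‖ ≤ R) (b : ellInfty) :
    opT F hF (-b) = -opT F hF b := by
  refine ContinuousLinearMap.ext (fun x => ?_)
  ext m
  rw [ContinuousLinearMap.neg_apply, lp.coeFn_neg]
  show (-b) m * F m x = -((opT F hF b x) m)
  rw [lp.coeFn_neg, opT_apply]
  show (-(b : ℕ → ℝ)) m * F m x = -(b m * F m x)
  simp only [Pi.neg_apply]
  ring

lemma opT_zero (F : ℕ → X →L[ℝ] ℝ) {R : ℝ} (hF : ∀ m, ‖F m‖ ≤ R) :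
    opT F hF 0 = 0 := by
  refine ContinuousLinearMap.ext (fun x => ?_)
  ext m
  rw [opT_apply]
  show (0 : ellInfty) m * F m x = (0 : ellInfty) m
  show (0 : ℝ) * F m x = (0 : ℝ)
  ring

/-- The operators built from differences of elements of an L-Dunford-Pettis set are
Dunford-Pettis completely continuous. -/
lemma opT_isDPcc {A : Set (X →L[ℝ] ℝ)} (hA : IsLDPSet A) (g : X →L[ℝ] ℝ)
    {f : ℕ → X →L[ℝ] ℝ} (hf : ∀ m, f m ∈ A) {R : ℝ}
    (hF : ∀ m, ‖f m - g‖ ≤ R) (b : ellInfty) :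
    IsDPcc (opT (fun m => f m - g) hF b) := by
  intro x hxw hxdp
  obtain ⟨M, hM⟩ := hA.1.exists_norm_le
  have hbdd : ∀ j, BddAbove (Set.range fun φ : A => |(φ : X →L[ℝ] ℝ) (x j)|) := by
    intro j
    refine ⟨M * ‖x j‖, ?_⟩
    rintro t ⟨φ, rfl⟩
    exact le_trans ((φ : X →L[ℝ] ℝ).le_opNorm (x j))
      (mul_le_mul_of_nonneg_right (hM _ φ.2) (norm_nonneg _))
  set S : ℕ → ℝ := fun j => ⨆ φ : A, |(φ : X →L[ℝ] ℝ) (x j)| with hS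
  have hSnonneg : ∀ j, 0 ≤ S j := fun j => Real.iSup_nonneg (fun φ => abs_nonneg _)
  have hbound : ∀ j, ‖opT (fun m => f m - g) hF b (x j)‖ ≤ ‖b‖ * (S j + |g (x j)|) := by
    intro j
    refine lp.norm_le_of_forall_le' _ (fun m => ?_)
    show ‖b m * (f m - g) (x j)‖ ≤ _
    rw [Real.norm_eq_abs, abs_mul]
    refine mul_le_mul (abs_coord_le b m) ?_ (abs_nonneg _) (norm_nonneg b)
    have h1 : |(f m - g) (x j)| ≤ |f m (x j)| + |g (x j)| := by
      rw [ContinuousLinearMap.sub_apply]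
      exact abs_sub _ _
    refine h1.trans (add_le_add ?_ le_rfl)
    exact le_ciSup (hbdd j) (⟨f m, hf m⟩ : A)
  have hlim : Tendsto (fun j => ‖b‖ * (S j + |g (x j)|)) atTop (𝓝 0) := by
    have h1 : Tendsto S atTop (𝓝 0) := hA.2 x hxw hxdp
    have h2 : Tendsto (fun j => |g (x j)|) atTop (𝓝 0) := by
      have := (hxw g).abs
      simpa using this
    have h3 := (h1.add h2).const_mul ‖b‖
    rw [add_zero, mul_zero] at h3
    exact h3
  exact squeeze_zero (fun j => norm_nonneg _) hbound hlim

/-- An operator into ℓ∞ whose range lies in a finite dimensional subspace is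
weakly compact. -/
lemma isWeaklyCompactOp_of_range_subset (T : X →L[ℝ] ellInfty) (V : Submodule ℝ ellInfty)
    [FiniteDimensional ℝ V] (h : ∀ x, T x ∈ V) : IsWeaklyCompactOp T := by
  haveI : ProperSpace V := FiniteDimensional.proper ℝ V
  have hc : IsCompact (closedBall (0 : V) ‖T‖) := isCompact_closedBall _ _
  have hc2 : IsCompact ((Subtype.val : V → ellInfty) '' closedBall 0 ‖T‖) :=
    hc.image continuous_subtype_val
  have hc3 : IsCompact ((toWeakSpaceCLM ℝ ellInfty) ''
      ((Subtype.val : V → ellInfty) '' closedBall 0 ‖T‖)) :=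
    hc2.image (toWeakSpaceCLM ℝ ellInfty).continuous
  refine IsCompact.of_isClosed_subset hc3 isClosed_closure (closure_minimal ?_ hc3.isClosed)
  rintro w ⟨v, ⟨x, hx, rfl⟩, rfl⟩
  refine ⟨T x, ⟨⟨T x, h x⟩, ?_, rfl⟩, ?_⟩
  · rw [mem_closedBall_zero_iff]
    show ‖T x‖ ≤ ‖T‖
    rw [mem_closedBall_zero_iff] at hx
    exact le_trans (T.le_opNorm x) (mul_le_of_le_one_right (norm_nonneg T) hx)
  · rw [← toWeakSpaceCLM_eq_toWeakSpace]

/-- The submodule of sequences supported on `s`. -/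
def suppSubmodule (s : Set ℕ) : Submodule ℝ ellInfty where
  carrier := {v : ellInfty | ∀ m, m ∉ s → v m = 0}
  add_mem' := by
    intro a b ha hb m hm
    rw [lp.coeFn_add]
    show a m + b m = 0
    rw [ha m hm, hb m hm, add_zero]
  zero_mem' := fun m _ => rfl
  smul_mem' := by
    intro c v hv m hm
    rw [lp.coeFn_smul]
    show c • v m = 0
    rw [hv m hm, smul_zero]

lemma finiteDimensional_suppSubmodule {s : Set ℕ} (hs : s.Finite) :
    FiniteDimensional ℝ (suppSubmodule s) := by
  haveI := hs.fintype
  let Φ : suppSubmodule s →ₗ[ℝ] (s → ℝ) :=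
    { toFun := fun v i => (v : ellInfty) i
      map_add' := by
        intro u v; funext i
        show ((u : ellInfty) + (v : ellInfty)) i = (u : ellInfty) i + (v : ellInfty) i
        rw [lp.coeFn_add]; rfl
      map_smul' := by
        intro c v; funext i
        show (c • (v : ellInfty)) i = c • ((v : ellInfty) i)
        rw [lp.coeFn_smul]; rfl }
  refine FiniteDimensional.of_injective Φ ?_
  intro u v huv
  apply Subtype.ext
  ext m
  by_cases hm : m ∈ s
  · exact congrFun huv ⟨m, hm⟩
  · rw [u.2 m hm, v.2 m hm]


/-- Helly-type approximation: an element of the bidual of norm at most one can be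
approximated, on finitely many functionals, by evaluation at a point of the unit ball. -/
lemma helly (y'' : (X →L[ℝ] ℝ) →L[ℝ] ℝ) (hy : ‖y''‖ ≤ 1)
    (L : List (X →L[ℝ] ℝ)) {δ : ℝ} (hδ : 0 < δ) :
    ∃ x : X, ‖x‖ ≤ 1 ∧ ∀ h ∈ L, |h x - y'' h| < δ := by
  classical
  set n := L.length with hn
  let evL : X →ₗ[ℝ] (Fin n → ℝ) :=
    { toFun := fun x i => L.get i x
      map_add' := by intro x y; funext i; simp
      map_smul' := by intro c x; funext i; simp }
  set S : Set (Fin n → ℝ) := evL '' closedBall 0 1 with hSdef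
  set t₀ : Fin n → ℝ := fun i => y'' (L.get i) with ht₀
  have ht : t₀ ∈ closure S := by
    by_contra hmem
    have hconv : Convex ℝ (closure S) :=
      ((convex_closedBall (0 : X) 1).linear_image evL).closure
    obtain ⟨Λ, u, hS, hu⟩ := geometric_hahn_banach_closed_point hconv isClosed_closure hmem
    set e : Fin n → (Fin n → ℝ) := fun i j => if i = j then 1 else 0 with he
    set a : Fin n → ℝ := fun i => Λ (e i) with ha
    have key : ∀ y : Fin n → ℝ, Λ y = ∑ i, y i * a i := by
      intro y
      conv_lhs => rw [pi_eq_sum_univ y]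
      rw [map_sum]
      refine Finset.sum_congr rfl (fun i _ => ?_)
      rw [map_smul]
      simp [ha, he, smul_eq_mul]
    set h_a : X →L[ℝ] ℝ := ∑ i, a i • L.get i with hha
    have hEv : ∀ x : X, Λ (evL x) = h_a x := by
      intro x
      rw [key]
      simp only [hha, ContinuousLinearMap.sum_apply, ContinuousLinearMap.coe_smul',
        Pi.smul_apply, smul_eq_mul]
      refine Finset.sum_congr rfl (fun i _ => ?_)
      show (L.get i) x * a i = a i * (L.get i) x
      ring
    have h0S : (0 : Fin n → ℝ) ∈ closure S := by
      refine subset_closure ⟨0, mem_closedBall_self zero_le_one, ?_⟩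
      funext i; simp
    have hu0 : 0 < u := by
      have := hS 0 h0S
      simpa using this
    have hnorm : ‖h_a‖ ≤ u := by
      refine ContinuousLinearMap.opNorm_le_bound _ (le_of_lt hu0) (fun x => ?_)
      rcases eq_or_ne x 0 with rfl | hx0
      · simp
      · have hz : ‖(‖x‖⁻¹ • x : X)‖ ≤ 1 := by
          rw [norm_smul, norm_inv, norm_norm, inv_mul_cancel₀ (norm_ne_zero_iff.2 hx0)]
        have h1 : h_a (‖x‖⁻¹ • x) < u := by
          rw [← hEv]
          exact hS _ (subset_closure ⟨_, mem_closedBall_zero_iff.2 hz, rfl⟩)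
        have h2 : h_a (-(‖x‖⁻¹ • x)) < u := by
          rw [← hEv]
          refine hS _ (subset_closure ⟨_, ?_, rfl⟩)
          rw [mem_closedBall_zero_iff, norm_neg]
          exact hz
        rw [map_neg] at h2
        have habs : |h_a (‖x‖⁻¹ • x)| ≤ u := abs_le.2 ⟨by linarith, le_of_lt h1⟩
        have : h_a x = ‖x‖ * h_a (‖x‖⁻¹ • x) := by
          rw [map_smul, smul_eq_mul, ← mul_assoc, mul_inv_cancel₀ (norm_ne_zero_iff.2 hx0),
            one_mul]
        rw [Real.norm_eq_abs, this, abs_mul, abs_norm, mul_comm]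
        exact mul_le_mul_of_nonneg_right habs (norm_nonneg x)
    have hfinal : Λ t₀ ≤ u := by
      have h1 : Λ t₀ = y'' h_a := by
        rw [key]
        simp only [hha, map_sum, map_smul, smul_eq_mul]
        refine Finset.sum_congr rfl (fun i _ => ?_)
        show y'' (L.get i) * a i = a i * y'' (L.get i)
        ring
      rw [h1]
      calc y'' h_a ≤ |y'' h_a| := le_abs_self _
      _ ≤ ‖y''‖ * ‖h_a‖ := y''.le_opNorm h_a
      _ ≤ 1 * u := mul_le_mul hy hnorm (norm_nonneg _) zero_le_one
      _ = u := one_mul u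
    exact absurd hu (not_lt.2 hfinal)
  obtain ⟨z, hzS, hzd⟩ := Metric.mem_closure_iff.1 ht δ hδ
  obtain ⟨x, hx, rfl⟩ := hzS
  refine ⟨x, mem_closedBall_zero_iff.1 hx, fun h hh => ?_⟩
  obtain ⟨i, rfl⟩ := List.mem_iff_get.1 hh
  have := dist_le_pi_dist t₀ (evL x) i
  rw [Real.dist_eq] at this
  have h2 : |L.get i x - y'' (L.get i)| = |t₀ i - evL x i| := by
    rw [abs_sub_comm]; rfl
  rw [h2]
  exact lt_of_le_of_lt this hzd


/-- If a bounded set of functionals is not relatively weakly compact, there is an element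
of the bidual which is "discontinuous along the set" at some point `g`. -/
lemma exists_discontinuity {A : Set (X →L[ℝ] ℝ)} (hb : Bornology.IsBounded A)
    (hnc : ¬ RelWeaklyCompact A) :
    ∃ (x'' : (X →L[ℝ] ℝ) →L[ℝ] ℝ) (g : X →L[ℝ] ℝ) (ε : ℝ), 0 < ε ∧
      ∀ (s : Finset X) (δ : ℝ), 0 < δ →
        ∃ f ∈ A, (∀ z ∈ s, |f z - g z| < δ) ∧ ε < |x'' f - x'' g| := by
  classical
  by_contra hcon
  push_neg at hcon
  apply hnc
  obtain ⟨M, hM⟩ := hb.exists_norm_le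
  set K : Set (WeakDual ℝ X) :=
    closure ((StrongDual.toWeakDual : StrongDual ℝ X ≃ₗ[ℝ] WeakDual ℝ X) '' A)
    with hK
  have hKc : IsCompact K := by
    have hball : IsCompact (WeakDual.toStrongDual ⁻¹' closedBall (0 : StrongDual ℝ X) M) :=
      WeakDual.isCompact_closedBall 0 M
    refine IsCompact.of_isClosed_subset hball isClosed_closure (closure_minimal ?_ hball.isClosed)
    rintro w ⟨f, hf, rfl⟩
    simp only [Set.mem_preimage, mem_closedBall_zero_iff]
    exact hM f hf
  -- the identity from the weak* topology to the weak topology is continuous on K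
  set B := (topDualPairing ℝ (X →L[ℝ] ℝ)).flip with hBdef
  have hinj : Function.Injective ⇑B := by
    intro u v huv
    by_contra hne
    obtain ⟨φ, -, hφ⟩ := exists_dual_vector ℝ (u - v) (norm_ne_zero_iff.2 (sub_ne_zero_of_ne hne))
    have h1 : B u φ = B v φ := by rw [huv]
    have h2 : φ u = φ v := h1
    rw [map_sub, h2, sub_self] at hφ
    exact (sub_ne_zero_of_ne hne) (norm_eq_zero.1 (by exact_mod_cast hφ.symm))
  have hcont : ContinuousOn
      (fun w : WeakDual ℝ X => toWeakSpace ℝ (X →L[ℝ] ℝ) (WeakDual.toStrongDual w)) K := by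
    intro g hg
    rw [ContinuousWithinAt]
    refine (WeakBilin.tendsto_iff_forall_eval_tendsto B hinj).2 ?_
    intro y
    show Tendsto (fun w : WeakDual ℝ X => y (WeakDual.toStrongDual w)) (𝓝[K] g)
      (𝓝 (y (WeakDual.toStrongDual g)))
    rw [Metric.tendsto_nhds]
    intro ε hε
    set g₀ : X →L[ℝ] ℝ := WeakDual.toStrongDual g with hg₀
    obtain ⟨s, δ, hδ, hcontrol⟩ := hcon y g₀ (ε/3) (by linarith)
    set N : Set (WeakDual ℝ X) := {w | ∀ z ∈ s, |w z - g₀ z| < δ/2} with hN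
    have hNopen : IsOpen N := by
      have : N = ⋂ z ∈ (s : Set X), (fun w : WeakDual ℝ X => w z) ⁻¹' (ball (g₀ z) (δ/2)) := by
        ext w
        simp only [hN, Set.mem_setOf_eq, Set.mem_iInter, Set.mem_preimage, mem_ball,
          Real.dist_eq, Finset.mem_coe]
      rw [this]
      exact (s : Set X).toFinite.isOpen_biInter
        (fun z _ => (WeakDual.eval_continuous z).isOpen_preimage _ isOpen_ball)
    have hgN : g ∈ N := by
      intro z _
      rw [show g₀ z = g z from rfl, sub_self, abs_zero]
      exact half_pos hδ
    have key : ∀ w ∈ N ∩ K, |y (WeakDual.toStrongDual w) - y g₀| < ε := by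
      rintro w ⟨hwN, hwK⟩
      set w₀ : X →L[ℝ] ℝ := WeakDual.toStrongDual w with hw₀
      obtain ⟨s', δ', hδ', hcontrol'⟩ := hcon y w₀ (ε/3) (by linarith)
      set O : Set (WeakDual ℝ X) :=
        {v | (∀ z ∈ s', |v z - w₀ z| < δ') ∧ (∀ z ∈ s, |v z - w₀ z| < δ/2)} with hO
      have hOopen : IsOpen O := by
        have : O = (⋂ z ∈ (s' : Set X), (fun v : WeakDual ℝ X => v z) ⁻¹' (ball (w₀ z) δ'))
            ∩ (⋂ z ∈ (s : Set X), (fun v : WeakDual ℝ X => v z) ⁻¹' (ball (w₀ z) (δ/2))) := by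
          ext v
          simp only [hO, Set.mem_setOf_eq, Set.mem_inter_iff, Set.mem_iInter, Set.mem_preimage,
            mem_ball, Real.dist_eq, Finset.mem_coe]
        rw [this]
        exact ((s' : Set X).toFinite.isOpen_biInter
            (fun z _ => (WeakDual.eval_continuous z).isOpen_preimage _ isOpen_ball)).inter
          ((s : Set X).toFinite.isOpen_biInter
            (fun z _ => (WeakDual.eval_continuous z).isOpen_preimage _ isOpen_ball))
      have hwO : w ∈ O := by
        constructor
        · intro z _
          rw [show w₀ z = w z from rfl, sub_self, abs_zero]
          exact hδ'
        · intro z _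
          rw [show w₀ z = w z from rfl, sub_self, abs_zero]
          exact half_pos hδ
      obtain ⟨v, hvO, hvA⟩ := (_root_.mem_closure_iff.1 hwK) O hOopen hwO
      obtain ⟨f, hfA, rfl⟩ := hvA
      have hfw : |y f - y w₀| ≤ ε/3 := hcontrol' f hfA (fun z hz => hvO.1 z hz)
      have hfg : |y f - y g₀| ≤ ε/3 := by
        refine hcontrol f hfA (fun z hz => ?_)
        have h1 := hvO.2 z hz
        have h2 := hwN z hz
        calc |f z - g₀ z| = |(f z - w₀ z) + (w₀ z - g₀ z)| := by ring_nf
        _ ≤ |f z - w₀ z| + |w₀ z - g₀ z| := abs_add_le _ _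
        _ < δ/2 + δ/2 := add_lt_add h1 h2
        _ = δ := add_halves δ
      calc |y w₀ - y g₀| = |(y f - y g₀) - (y f - y w₀)| := by ring_nf
      _ ≤ |y f - y g₀| + |y f - y w₀| := abs_sub _ _
      _ ≤ ε/3 + ε/3 := add_le_add hfg hfw
      _ < ε := by linarith
    have hev : ∀ᶠ w in 𝓝[K] g, w ∈ N ∩ K := by
      have h1 : ∀ᶠ w in 𝓝[K] g, w ∈ N :=
        eventually_nhdsWithin_of_eventually_nhds (hNopen.eventually_mem hgN)
      have h2 : ∀ᶠ w in 𝓝[K] g, w ∈ K := eventually_mem_nhdsWithin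
      exact h1.and h2
    refine hev.mono (fun w hw => ?_)
    rw [Real.dist_eq]
    exact key w hw
  have himg : IsCompact ((fun w : WeakDual ℝ X =>
      toWeakSpace ℝ (X →L[ℝ] ℝ) (WeakDual.toStrongDual w)) '' K) :=
    hKc.image_of_continuousOn hcont
  refine IsCompact.of_isClosed_subset himg isClosed_closure
    (closure_minimal ?_ himg.isClosed)
  rintro w ⟨f, hf, rfl⟩
  exact ⟨StrongDual.toWeakDual f, subset_closure ⟨f, hf, rfl⟩, rfl⟩


/-- Extraction of a double-limit witness from a non relatively weakly compact bounded set
of functionals. -/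
lemma extraction {A : Set (X →L[ℝ] ℝ)} (hb : Bornology.IsBounded A)
    (hnc : ¬ RelWeaklyCompact A) :
    ∃ (f : ℕ → X →L[ℝ] ℝ) (g : X →L[ℝ] ℝ) (x : ℕ → X) (γ : ℕ → ℝ) (ε : ℝ),
      (∀ m, f m ∈ A) ∧ (∀ k, ‖x k‖ ≤ 1) ∧ 0 < ε ∧
      (∀ k, Tendsto (fun m => f m (x k)) atTop (𝓝 (g (x k)))) ∧
      (∀ m, Tendsto (fun k => f m (x k) - g (x k)) atTop (𝓝 (γ m))) ∧
      (∀ m, ε ≤ |γ m|) := by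
  classical
  obtain ⟨x'', g, ε₀, hε₀, hQ⟩ := exists_discontinuity hb hnc
  have hc : 0 < ‖x''‖ := by
    obtain ⟨f, hfA, -, hgap⟩ := hQ ∅ 1 one_pos
    by_contra hle
    push_neg at hle
    have h0 : ‖x''‖ = 0 := le_antisymm hle (norm_nonneg x'')
    have habs : |x'' f - x'' g| ≤ 0 := by
      have h1 : x'' f - x'' g = x'' (f - g) := (map_sub x'' f g).symm
      rw [h1]
      calc |x'' (f - g)| ≤ ‖x''‖ * ‖f - g‖ := x''.le_opNorm _
      _ = 0 := by rw [h0, zero_mul]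
    linarith [abs_nonneg (x'' f - x'' g)]
  set c := ‖x''‖ with hcdef
  set y'' := c⁻¹ • x'' with hy''def
  have hy : ‖y''‖ ≤ 1 := by
    refine ContinuousLinearMap.opNorm_le_bound _ zero_le_one (fun h => ?_)
    have h1 : y'' h = c⁻¹ * x'' h := by rw [hy''def]; rfl
    rw [h1, Real.norm_eq_abs, abs_mul, abs_of_pos (inv_pos.2 hc), one_mul]
    have h2 : |x'' h| ≤ c * ‖h‖ := by
      rw [hcdef]
      exact x''.le_opNorm h
    calc c⁻¹ * |x'' h| ≤ c⁻¹ * (c * ‖h‖) :=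
          mul_le_mul_of_nonneg_left h2 (le_of_lt (inv_pos.2 hc))
    _ = ‖h‖ := by rw [← mul_assoc, inv_mul_cancel₀ (ne_of_gt hc), one_mul]
  have hQ' : ∀ (s : Finset X) (δ : ℝ), 0 < δ →
      ∃ f, f ∈ A ∧ (∀ z ∈ s, |f z - g z| < δ) ∧ ε₀ / c < |y'' f - y'' g| := by
    intro s δ hδ
    obtain ⟨f, hfA, hclose, hgap⟩ := hQ s δ hδ
    refine ⟨f, hfA, hclose, ?_⟩
    have h1 : y'' f - y'' g = c⁻¹ * (x'' f - x'' g) := by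
      rw [hy''def]
      simp only [ContinuousLinearMap.coe_smul', Pi.smul_apply, smul_eq_mul]
      ring
    rw [h1, abs_mul, abs_of_pos (inv_pos.2 hc), div_eq_inv_mul]
    exact mul_lt_mul_of_pos_left hgap (inv_pos.2 hc)
  set ε1 := ε₀ / c with hε1def
  have hε1 : 0 < ε1 := div_pos hε₀ hc
  -- recursive construction
  set F : List ((X →L[ℝ] ℝ) × X) → (X →L[ℝ] ℝ) := fun l =>
    Classical.choose (hQ' (l.map Prod.snd).toFinset (1/(l.length+1)) (by positivity)) with hF
  have Fspec : ∀ l, F l ∈ A ∧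
      (∀ z ∈ (l.map Prod.snd).toFinset, |F l z - g z| < 1/(l.length+1)) ∧
      ε1 < |y'' (F l) - y'' g| :=
    fun l => Classical.choose_spec (hQ' (l.map Prod.snd).toFinset (1/(l.length+1))
      (by positivity))
  set xF : List ((X →L[ℝ] ℝ) × X) → X := fun l =>
    Classical.choose (helly y'' hy (F l :: g :: l.map Prod.fst)
      (show (0:ℝ) < 1/(l.length+1) by positivity)) with hxF
  have xFspec : ∀ l, ‖xF l‖ ≤ 1 ∧
      ∀ h ∈ (F l :: g :: l.map Prod.fst), |h (xF l) - y'' h| < 1/(l.length+1) :=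
    fun l => Classical.choose_spec (helly y'' hy (F l :: g :: l.map Prod.fst)
      (show (0:ℝ) < 1/(l.length+1) by positivity))
  set step : List ((X →L[ℝ] ℝ) × X) → ((X →L[ℝ] ℝ) × X) := fun l => (F l, xF l) with hstep
  set hist : ℕ → List ((X →L[ℝ] ℝ) × X) :=
    fun n => Nat.rec [] (fun _ ih => ih ++ [step ih]) n with hhistdef
  have hist_succ : ∀ n, hist (n+1) = hist n ++ [step (hist n)] := fun n => rfl
  have hist_eq : ∀ n, hist n = (List.range n).map (fun k => step (hist k)) := by
    intro n
    induction n with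
    | zero => rfl
    | succ n ih =>
      rw [hist_succ, List.range_succ, List.map_append, ← ih]
      simp
  have hist_len : ∀ n, (hist n).length = n := by
    intro n; rw [hist_eq, List.length_map, List.length_range]
  set f : ℕ → (X →L[ℝ] ℝ) := fun m => F (hist m) with hfdef
  set x : ℕ → X := fun m => xF (hist m) with hxdef
  have mem_hist : ∀ {n k}, k < n → (f k, x k) ∈ hist n := by
    intro n k hk
    rw [hist_eq]
    exact List.mem_map.2 ⟨k, List.mem_range.2 hk, rfl⟩
  have htends0 : Tendsto (fun m : ℕ => 1/((m:ℝ)+1)) atTop (𝓝 0) :=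
    tendsto_one_div_add_atTop_nhds_zero_nat
  set γ : ℕ → ℝ := fun m => y'' (f m) - y'' g with hγdef
  refine ⟨f, g, x, γ, ε1, fun m => (Fspec (hist m)).1, fun k => (xFspec (hist k)).1, hε1,
    ?_, ?_, ?_⟩
  · -- (i) for fixed k, f m (x k) → g (x k)
    intro k
    have h0 : Tendsto (fun m => f m (x k) - g (x k)) atTop (𝓝 0) := by
      refine squeeze_zero_norm' ?_ htends0
      filter_upwards [eventually_ge_atTop (k+1)] with m hm
      have hk : k < m := hm
      have hmem : x k ∈ ((hist m).map Prod.snd).toFinset :=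
        List.mem_toFinset.2 (List.mem_map.2 ⟨(f k, x k), mem_hist hk, rfl⟩)
      have := (Fspec (hist m)).2.1 (x k) hmem
      rw [hist_len] at this
      rw [Real.norm_eq_abs]
      exact le_of_lt this
    have := h0.add_const (g (x k))
    simpa using this
  · -- (ii) for fixed m, f m (x k) - g (x k) → γ m
    intro m
    have h1 : Tendsto (fun k => f m (x k)) atTop (𝓝 (y'' (f m))) := by
      have h0 : Tendsto (fun k => f m (x k) - y'' (f m)) atTop (𝓝 0) := by
        refine squeeze_zero_norm' ?_ htends0
        filter_upwards [eventually_ge_atTop m] with k hk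
        have hmem : f m ∈ (F (hist k) :: g :: (hist k).map Prod.fst) := by
          rcases eq_or_lt_of_le hk with rfl | hlt
          · exact List.mem_cons_self
          · refine List.mem_cons_of_mem _ (List.mem_cons_of_mem _ ?_)
            exact List.mem_map.2 ⟨(f m, x m), mem_hist hlt, rfl⟩
        have := (xFspec (hist k)).2 (f m) hmem
        rw [hist_len] at this
        rw [Real.norm_eq_abs]
        exact le_of_lt this
      have := h0.add_const (y'' (f m))
      simpa using this
    have h2 : Tendsto (fun k => g (x k)) atTop (𝓝 (y'' g)) := by
      have h0 : Tendsto (fun k => g (x k) - y'' g) atTop (𝓝 0) := by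
        refine squeeze_zero_norm' ?_ htends0
        filter_upwards [] with k
        have hmem : g ∈ (F (hist k) :: g :: (hist k).map Prod.fst) :=
          List.mem_cons_of_mem _ List.mem_cons_self
        have := (xFspec (hist k)).2 g hmem
        rw [hist_len] at this
        rw [Real.norm_eq_abs]
        exact le_of_lt this
      have := h0.add_const (y'' g)
      simpa using this
    exact h1.sub h2
  · -- (iii) gap
    intro m
    exact le_of_lt (Fspec (hist m)).2.2


/-- An almost disjoint family of infinite subsets of ℕ indexed by the reals. -/
lemma exists_ad_family : ∃ 𝒜 : ℝ → Set ℕ, (∀ r, (𝒜 r).Infinite) ∧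
    (∀ r s, r ≠ s → (𝒜 r ∩ 𝒜 s).Finite) := by
  classical
  have hseq : ∀ r : ℝ, ∃ q : ℕ → ℚ, (Function.Injective q) ∧ (∀ j, (q j : ℝ) < r) ∧
      (∀ j : ℕ, r - 1/(j+1) < (q j : ℝ)) := by
    intro r
    have hstep : ∀ (j : ℕ) (q : ℚ), (q : ℝ) < r →
        ∃ q' : ℚ, max (q : ℝ) (r - 1/(j+2)) < (q' : ℝ) ∧ (q' : ℝ) < r := by
      intro j q hq
      have hmax : max (q : ℝ) (r - 1/(j+2)) < r := by
        refine max_lt hq ?_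
        have : (0:ℝ) < 1/(j+2) := by positivity
        linarith
      obtain ⟨q', h1, h2⟩ := exists_rat_btwn hmax
      exact ⟨q', h1, h2⟩
    obtain ⟨q₀, hq₀1, hq₀2⟩ := exists_rat_btwn (show r - 1/(0+1) < r by norm_num)
    set Q : ℕ → {q : ℚ // (q : ℝ) < r} :=
      fun n => Nat.rec ⟨q₀, hq₀2⟩
        (fun j ih => ⟨Classical.choose (hstep j ih.1 ih.2),
          (Classical.choose_spec (hstep j ih.1 ih.2)).2⟩) n with hQ
    have hQsucc : ∀ j, max (((Q j : ℚ) : ℝ)) (r - 1/(j+2)) < ((Q (j+1) : ℚ) : ℝ) :=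
      fun j => (Classical.choose_spec (hstep j (Q j).1 (Q j).2)).1
    have hmono : StrictMono (fun j => ((Q j : ℚ) : ℝ)) := by
      refine strictMono_nat_of_lt_succ (fun j => ?_)
      exact lt_of_le_of_lt (le_max_left _ _) (hQsucc j)
    refine ⟨fun j => (Q j).1, ?_, fun j => (Q j).2, ?_⟩
    · intro i j hij
      exact hmono.injective (congrArg (fun q : ℚ => (q : ℝ)) hij)
    · intro j
      cases j with
      | zero =>
        have : r - 1/((0:ℕ)+1 : ℝ) = r - 1/(0+1) := by norm_num
        rw [this]
        exact hq₀1
      | succ j =>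
        have h1 := lt_of_le_of_lt (le_max_right (((Q j : ℚ) : ℝ)) (r - 1/(j+2))) (hQsucc j)
        have h2 : r - 1/(((j+1:ℕ)):ℝ) - 0 = r - 1/((j:ℝ)+1) := by push_cast; ring
        have h3 : r - (1:ℝ)/((j+1:ℕ)+1) = r - 1/((j:ℝ)+2) := by push_cast; ring
        rw [h3]
        exact h1
  set q : ℝ → ℕ → ℚ := fun r => Classical.choose (hseq r) with hq
  have hqspec : ∀ r, Function.Injective (q r) ∧ (∀ j, (q r j : ℝ) < r) ∧
      (∀ j : ℕ, r - 1/(j+1) < (q r j : ℝ)) := fun r => Classical.choose_spec (hseq r)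
  refine ⟨fun r => Set.range (fun j => Encodable.encode (q r j)), ?_, ?_⟩
  · intro r
    refine Set.infinite_range_of_injective ?_
    exact fun i j hij => (hqspec r).1 (Encodable.encode_injective hij)
  · intro r s hrs
    -- by symmetry assume s < r
    wlog hlt : s < r generalizing r s
    · rw [Set.inter_comm]
      exact this s r (Ne.symm hrs) (lt_of_le_of_ne (not_lt.1 hlt) hrs)
    by_contra hinf
    have hinf2 : ((Set.range fun j => Encodable.encode (q r j)) ∩
        (Set.range fun i => Encodable.encode (q s i))).Infinite := hinf
    set J : Set ℕ := {j | Encodable.encode (q r j) ∈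
      Set.range (fun i => Encodable.encode (q s i))} with hJ
    have himg : Set.range (fun j => Encodable.encode (q r j)) ∩
        Set.range (fun i => Encodable.encode (q s i)) ⊆
        (fun j => Encodable.encode (q r j)) '' J := by
      rintro n ⟨⟨j, rfl⟩, hn⟩
      exact ⟨j, hn, rfl⟩
    have hJinf : J.Infinite := by
      have h1 : ((fun j => Encodable.encode (q r j)) '' J).Infinite :=
        Set.Infinite.mono himg hinf2
      exact Set.Infinite.of_image _ h1
    have hd : 0 < r - s := by linarith
    obtain ⟨N, hN⟩ := exists_nat_gt (1/(r-s))
    obtain ⟨j, hjJ, hjN⟩ := hJinf.exists_gt N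
    have h1 : 1/((j:ℝ)+1) < r - s := by
      rw [div_lt_iff₀ (by positivity)]
      have h2 : 1/(r-s) < (j:ℝ)+1 := by
        have : (N:ℝ) < j := by exact_mod_cast hjN
        linarith
      have h3 : (r-s) * (1/(r-s)) < (r-s)*((j:ℝ)+1) := mul_lt_mul_of_pos_left h2 hd
      rw [mul_one_div, div_self (ne_of_gt hd)] at h3
      nlinarith
    obtain ⟨i, hi⟩ := hjJ
    have heq : q s i = q r j := Encodable.encode_injective hi
    have h3 : (q s i : ℝ) < s := (hqspec s).2.1 i
    have h4 : r - 1/((j:ℝ)+1) < (q r j : ℝ) := (hqspec r).2.2 j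
    rw [heq] at h3
    linarith

/-- Whitley's counting argument: an additive bounded functional on ℓ∞ vanishing on
indicators of finite sets vanishes on the indicators of all but countably many members of
an almost disjoint family. -/
lemma whitley_countable {lam : ellInfty → ℝ} {κ : ℝ} (hκ : 0 ≤ κ)
    (hadd : ∀ u v, lam (u + v) = lam u + lam v)
    (hbound : ∀ u, |lam u| ≤ κ * ‖u‖)
    (hvan : ∀ s : Set ℕ, s.Finite → lam (ind s) = 0)
    {𝒜 : ℝ → Set ℕ} (had : ∀ r s, r ≠ s → (𝒜 r ∩ 𝒜 s).Finite) :
    {r : ℝ | lam (ind (𝒜 r)) ≠ 0}.Countable := by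
  classical
  have hlam0 : lam 0 = 0 := by
    have := hvan ∅ Set.finite_empty
    rwa [ind_empty] at this
  have hlamneg : ∀ u, lam (-u) = -lam u := by
    intro u
    have h1 := hadd u (-u)
    rw [add_neg_cancel, hlam0] at h1
    linarith
  have hlamsum : ∀ (t : Finset ℝ) (f : ℝ → ellInfty),
      lam (∑ i ∈ t, f i) = ∑ i ∈ t, lam (f i) := by
    intro t f
    induction t using Finset.induction with
    | empty => simpa using hlam0
    | insert a t' hnotmem ih =>
      rw [Finset.sum_insert hnotmem, Finset.sum_insert hnotmem, hadd, ih]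
  -- each level set is finite
  have hfin : ∀ Q : ℝ, 0 < Q → {r : ℝ | Q ≤ |lam (ind (𝒜 r))|}.Finite := by
    intro Q hQ
    by_contra hinf
    have hinf2 : {r : ℝ | Q ≤ |lam (ind (𝒜 r))|}.Infinite := hinf
    set n : ℕ := ⌊κ/Q⌋₊ + 1 with hn
    obtain ⟨t, htsub, htcard⟩ := hinf2.exists_subset_card_eq n
    set B : ℝ → Set ℕ := fun i => 𝒜 i \ ⋃ i' ∈ ((t.erase i : Finset ℝ) : Set ℝ), 𝒜 i' with hB
    have hBsub : ∀ i, B i ⊆ 𝒜 i := fun i => Set.diff_subset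
    have hBdisj : ∀ i ∈ t, ∀ i' ∈ t, i ≠ i' → ∀ m, m ∈ B i → m ∉ B i' := by
      intro i hi i' hi' hne m hmi hmi'
      have h1 : m ∉ ⋃ i'' ∈ ((t.erase i' : Finset ℝ) : Set ℝ), 𝒜 i'' := hmi'.2
      refine h1 (Set.mem_biUnion ?_ hmi.1)
      exact Finset.mem_coe.2 (Finset.mem_erase.2 ⟨hne, hi⟩)
    have hdifffin : ∀ i ∈ t, (𝒜 i \ B i).Finite := by
      intro i hi
      have h1 : 𝒜 i \ B i ⊆ ⋃ i' ∈ ((t.erase i : Finset ℝ) : Set ℝ), (𝒜 i ∩ 𝒜 i') := by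
        intro m hm
        have h2 : m ∈ 𝒜 i := hm.1
        have h3 : m ∈ ⋃ i' ∈ ((t.erase i : Finset ℝ) : Set ℝ), 𝒜 i' := by
          by_contra hc
          exact hm.2 ⟨h2, hc⟩
        obtain ⟨i', hi', hmi'⟩ := Set.mem_iUnion₂.1 h3
        exact Set.mem_iUnion₂.2 ⟨i', hi', h2, hmi'⟩
      refine Set.Finite.subset (Set.Finite.biUnion (Finset.finite_toSet _) ?_) h1
      intro i' hi'
      exact had i i' (Ne.symm (Finset.mem_erase.1 (Finset.mem_coe.1 hi')).1)
    have hlamB : ∀ i ∈ t, lam (ind (B i)) = lam (ind (𝒜 i)) := by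
      intro i hi
      have hsplit : B i ∪ (𝒜 i \ B i) = 𝒜 i := Set.union_diff_cancel (hBsub i)
      have hdisj2 : Disjoint (B i) (𝒜 i \ B i) := disjoint_sdiff_self_right
      have h4 := ind_union_disjoint hdisj2
      rw [hsplit] at h4
      rw [h4, hadd, hvan _ (hdifffin i hi), add_zero]
    set c : ℝ → ellInfty := fun i =>
      if 0 ≤ lam (ind (𝒜 i)) then ind (B i) else -ind (B i) with hc
    set b : ellInfty := ∑ i ∈ t, c i with hbdef
    have hlamc : ∀ i ∈ t, lam (c i) = |lam (ind (𝒜 i))| := by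
      intro i hi
      by_cases h : 0 ≤ lam (ind (𝒜 i))
      · rw [hc]
        simp only [if_pos h]
        rw [hlamB i hi, abs_of_nonneg h]
      · rw [hc]
        simp only [if_neg h]
        rw [hlamneg, hlamB i hi, abs_of_neg (not_le.1 h)]
    have hlamb : lam b = ∑ i ∈ t, |lam (ind (𝒜 i))| := by
      rw [hbdef, hlamsum]
      exact Finset.sum_congr rfl hlamc
    have hcoordc : ∀ i m, m ∉ B i → (c i) m = 0 := by
      intro i m hm
      rw [hc]
      by_cases h : 0 ≤ lam (ind (𝒜 i))
      · simp only [if_pos h]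
        exact ind_apply_not_mem hm
      · simp only [if_neg h]
        rw [lp.coeFn_neg]
        show -(ind (B i) m) = 0
        rw [ind_apply_not_mem hm, neg_zero]
    have hnormb : ‖b‖ ≤ 1 := by
      refine lp.norm_le_of_forall_le' 1 (fun m => ?_)
      have hbm : b m = ∑ i ∈ t, (c i) m := by
        rw [hbdef, lp.coeFn_sum]
        exact Finset.sum_apply m t _
      rw [Real.norm_eq_abs, hbm]
      by_cases hex : ∃ i ∈ t, m ∈ B i
      · obtain ⟨i₀, hi₀, hmi₀⟩ := hex
        have hsum : ∑ i ∈ t, (c i) m = (c i₀) m := by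
          refine Finset.sum_eq_single_of_mem i₀ hi₀ (fun i' hi' hne => ?_)
          exact hcoordc i' m (fun hmem => (hBdisj i₀ hi₀ i' hi' (Ne.symm hne) m hmi₀) hmem)
        rw [hsum, hc]
        by_cases h : 0 ≤ lam (ind (𝒜 i₀))
        · simp only [if_pos h]
          rw [ind_apply_mem hmi₀]
          norm_num
        · simp only [if_neg h]
          rw [lp.coeFn_neg]
          show |(-(ind (B i₀) m))| ≤ 1
          rw [ind_apply_mem hmi₀]
          norm_num
      · push_neg at hex
        rw [Finset.sum_eq_zero (fun i hi => hcoordc i m (hex i hi))]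
        norm_num
    have hub : lam b ≤ κ := by
      refine le_trans (le_abs_self _) (le_trans (hbound b) ?_)
      exact mul_le_of_le_one_right hκ hnormb
    have hge : (n:ℝ) * Q ≤ ∑ i ∈ t, |lam (ind (𝒜 i))| := by
      have h1 : ∀ i ∈ t, Q ≤ |lam (ind (𝒜 i))| := fun i hi => htsub hi
      calc (n:ℝ)*Q = ∑ _i ∈ t, Q := by
            rw [Finset.sum_const, htcard, nsmul_eq_mul]
      _ ≤ ∑ i ∈ t, |lam (ind (𝒜 i))| := Finset.sum_le_sum h1
    have hQk : κ < (n:ℝ)*Q := by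
      have h1 : κ/Q < (n:ℝ) := by
        rw [hn]
        push_cast
        exact Nat.lt_floor_add_one (κ/Q)
      calc κ = (κ/Q)*Q := by field_simp
      _ < (n:ℝ)*Q := mul_lt_mul_of_pos_right h1 hQ
    rw [hlamb] at hub
    linarith
  have hsub : {r : ℝ | lam (ind (𝒜 r)) ≠ 0} ⊆
      ⋃ n : ℕ, {r : ℝ | 1/((n:ℝ)+1) ≤ |lam (ind (𝒜 r))|} := by
    intro r hr
    have habs : 0 < |lam (ind (𝒜 r))| := abs_pos.2 hr
    obtain ⟨n, hn⟩ := exists_nat_one_div_lt habs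
    exact Set.mem_iUnion.2 ⟨n, le_of_lt hn⟩
  exact Set.Countable.mono hsub
    (Set.countable_iUnion (fun n => (hfin _ (by positivity)).countable))


end Stmt17

theorem stmt17 {X : Type*} [NormedAddCommGroup X] [NormedSpace ℝ X] [CompleteSpace X]
    (hX : ¬ HasLDPProperty X) :
    ¬ OpComplementedIn {T : X →L[ℝ] ellInfty | IsWeaklyCompactOp T}
        {T : X →L[ℝ] ellInfty | IsDPcc T} := by
  intro hP
  obtain ⟨P, Padd, Psmul, ⟨C, hC⟩, PW, Pfix⟩ := hP
  rw [HasLDPProperty] at hX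
  push_neg at hX
  obtain ⟨A₀, hA₀, hA₀nc⟩ := hX
  obtain ⟨f, g, x, γ, ε, hfA, hx, hε, hconvk, hconvm, hgap⟩ :=
    Stmt17.extraction hA₀.1 hA₀nc
  obtain ⟨M, hM⟩ := hA₀.1.exists_norm_le
  have hM0 : 0 ≤ M := le_trans (norm_nonneg (f 0)) (hM _ (hfA 0))
  set Mg := M + ‖g‖ with hMg
  have hMg0 : 0 ≤ Mg := add_nonneg hM0 (norm_nonneg g)
  have hFb : ∀ m, ‖f m - g‖ ≤ Mg := fun m =>
    le_trans (norm_sub_le _ _) (add_le_add (hM _ (hfA m)) le_rfl)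
  set T : ellInfty → (X →L[ℝ] ellInfty) := Stmt17.opT (fun m => f m - g) hFb with hT
  have hTD : ∀ b, T b ∈ {T : X →L[ℝ] ellInfty | IsDPcc T} :=
    fun b => Stmt17.opT_isDPcc hA₀ g hfA hFb b
  have hTadd : ∀ u v, T (u + v) = T u + T v := Stmt17.opT_add _ hFb
  have hTnorm : ∀ b, ‖T b‖ ≤ ‖b‖ * Mg := Stmt17.opT_norm_le _ hFb
  have hTfinW : ∀ s : Set ℕ, s.Finite →
      T (Stmt17.ind s) ∈ {T : X →L[ℝ] ellInfty | IsWeaklyCompactOp T} := by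
    intro s hs
    haveI := Stmt17.finiteDimensional_suppSubmodule hs
    refine Stmt17.isWeaklyCompactOp_of_range_subset _ (Stmt17.suppSubmodule s) ?_
    intro z m hm
    show T (Stmt17.ind s) z m = 0
    rw [hT, Stmt17.opT_apply, Stmt17.ind_apply_not_mem hm, zero_mul]
  have hTfix : ∀ s : Set ℕ, s.Finite → P (T (Stmt17.ind s)) = T (Stmt17.ind s) :=
    fun s hs => Pfix _ (hTfinW s hs)
  set κ : ℝ := (1 + max C 0) * Mg with hκdef
  have hκ0 : 0 ≤ κ :=
    mul_nonneg (add_nonneg zero_le_one (le_max_right C 0)) hMg0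
  set lam : ℕ → ℕ → ellInfty → ℝ :=
    fun m k b => (T b (x k)) m - (P (T b) (x k)) m with hlam
  have hlamadd : ∀ m k u v, lam m k (u + v) = lam m k u + lam m k v := by
    intro m k u v
    show (T (u + v) (x k)) m - (P (T (u + v)) (x k)) m = _
    rw [hTadd, Padd (T u) (hTD u) (T v) (hTD v), ContinuousLinearMap.add_apply,
      ContinuousLinearMap.add_apply, lp.coeFn_add, lp.coeFn_add]
    show (T u (x k)) m + (T v (x k)) m - ((P (T u) (x k)) m + (P (T v) (x k)) m) = _
    show _ = (T u (x k)) m - (P (T u) (x k)) m + ((T v (x k)) m - (P (T v) (x k)) m)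
    ring
  have hlambound : ∀ m k b, |lam m k b| ≤ κ * ‖b‖ := by
    intro m k b
    have hTb := hTnorm b
    have h0 : ‖T b (x k)‖ ≤ ‖b‖ * Mg := by
      refine le_trans ((T b).le_opNorm (x k)) ?_
      calc ‖T b‖ * ‖x k‖ ≤ ‖T b‖ * 1 := mul_le_mul_of_nonneg_left (hx k) (norm_nonneg _)
      _ = ‖T b‖ := mul_one _
      _ ≤ ‖b‖ * Mg := hTb
    have h1 : |(T b (x k)) m| ≤ ‖b‖ * Mg := le_trans (Stmt17.abs_coord_le _ m) h0
    have hP0 : ‖P (T b) (x k)‖ ≤ max C 0 * (‖b‖ * Mg) := by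
      refine le_trans ((P (T b)).le_opNorm (x k)) ?_
      calc ‖P (T b)‖ * ‖x k‖ ≤ ‖P (T b)‖ * 1 := mul_le_mul_of_nonneg_left (hx k) (norm_nonneg _)
      _ = ‖P (T b)‖ := mul_one _
      _ ≤ C * ‖T b‖ := hC (T b) (hTD b)
      _ ≤ max C 0 * ‖T b‖ := mul_le_mul_of_nonneg_right (le_max_left C 0) (norm_nonneg _)
      _ ≤ max C 0 * (‖b‖ * Mg) := mul_le_mul_of_nonneg_left hTb (le_max_right C 0)
    have h2 : |(P (T b) (x k)) m| ≤ max C 0 * (‖b‖ * Mg) :=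
      le_trans (Stmt17.abs_coord_le _ m) hP0
    calc |lam m k b| ≤ |(T b (x k)) m| + |(P (T b) (x k)) m| := abs_sub _ _
    _ ≤ ‖b‖ * Mg + max C 0 * (‖b‖ * Mg) := add_le_add h1 h2
    _ = κ * ‖b‖ := by rw [hκdef]; ring
  have hlamvan : ∀ m k (s : Set ℕ), s.Finite → lam m k (Stmt17.ind s) = 0 := by
    intro m k s hs
    show (T (Stmt17.ind s) (x k)) m - (P (T (Stmt17.ind s)) (x k)) m = 0
    rw [hTfix s hs, sub_self]
  obtain ⟨𝒜, h𝒜inf, h𝒜ad⟩ := Stmt17.exists_ad_family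
  have hbadcount : {r : ℝ | ∃ p : ℕ × ℕ, lam p.1 p.2 (Stmt17.ind (𝒜 r)) ≠ 0}.Countable := by
    have hEq : {r : ℝ | ∃ p : ℕ × ℕ, lam p.1 p.2 (Stmt17.ind (𝒜 r)) ≠ 0} =
        ⋃ p : ℕ × ℕ, {r : ℝ | lam p.1 p.2 (Stmt17.ind (𝒜 r)) ≠ 0} := by
      ext r
      simp [Set.mem_iUnion]
    rw [hEq]
    exact Set.countable_iUnion (fun p => Stmt17.whitley_countable hκ0 (hlamadd p.1 p.2)
      (hlambound p.1 p.2) (hlamvan p.1 p.2) h𝒜ad)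
  obtain ⟨r₀, hr₀⟩ : ∃ r : ℝ, ¬ ∃ p : ℕ × ℕ, lam p.1 p.2 (Stmt17.ind (𝒜 r)) ≠ 0 := by
    by_contra hall
    push_neg at hall
    exact Cardinal.not_countable_real
      (Set.Countable.mono (fun r _ => hall r) hbadcount)
  push_neg at hr₀
  set A := 𝒜 r₀ with hA
  have heq : ∀ m k, (P (T (Stmt17.ind A)) (x k)) m = (T (Stmt17.ind A) (x k)) m := by
    intro m k
    have h : (T (Stmt17.ind A) (x k)) m - (P (T (Stmt17.ind A)) (x k)) m = 0 := hr₀ (m, k)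
    exact (sub_eq_zero.1 h).symm
  set S := P (T (Stmt17.ind A)) with hS
  have hSW : IsWeaklyCompactOp S := PW _ (hTD _)
  have hAinf : A.Infinite := h𝒜inf r₀
  have hneBot : (Filter.principal A ⊓ Filter.cofinite).NeBot := by
    refine ⟨fun hbot => ?_⟩
    have hempty : (∅ : Set ℕ) ∈ Filter.principal A ⊓ Filter.cofinite := by
      rw [hbot]
      exact Filter.mem_bot
    obtain ⟨s, hs, t, ht, hst⟩ := Filter.mem_inf_iff.1 hempty
    have hsub : A ⊆ tᶜ := by
      intro a haA
      intro hat
      have : a ∈ s ∩ t := ⟨Filter.mem_principal.1 hs haA, hat⟩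
      rw [← hst] at this
      exact this
    exact hAinf (Set.Finite.subset (Filter.mem_cofinite.1 ht) hsub)
  set U := Ultrafilter.of (Filter.principal A ⊓ Filter.cofinite) with hU
  have hUle := Ultrafilter.of_le (Filter.principal A ⊓ Filter.cofinite)
  have hUA : A ∈ U := Filter.le_principal_iff.1 (le_trans hUle inf_le_left)
  have hUatTop : (U : Filter ℕ) ≤ atTop := by
    rw [← Nat.cofinite_eq_atTop]
    exact le_trans hUle inf_le_right
  have hφz : ∀ k, Stmt17.uLim U (S (x k)) = 0 := by
    intro k
    refine Stmt17.uLim_eq_of_tendsto ?_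
    have h1 : Tendsto (fun m => f m (x k) - g (x k)) atTop (𝓝 0) := by
      have h := (hconvk k).sub_const (g (x k))
      simpa using h
    have h2 : Tendsto (fun m => f m (x k) - g (x k)) (U : Filter ℕ) (𝓝 0) :=
      h1.mono_left hUatTop
    refine h2.congr' (Filter.eventuallyEq_of_mem hUA (fun m hm => ?_))
    show f m (x k) - g (x k) = (S (x k)) m
    rw [hS, heq m k, hT, Stmt17.opT_apply, Stmt17.ind_apply_mem hm, one_mul]
    exact (ContinuousLinearMap.sub_apply _ _ _).symm
  have hKc : IsCompact (closure ((toWeakSpace ℝ ellInfty) '' (S '' closedBall 0 1))) := hSW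
  set G := Filter.map (fun k => toWeakSpace ℝ ellInfty (S (x k))) atTop with hG
  haveI : G.NeBot := by
    rw [hG]
    exact Filter.map_neBot
  have hGle : G ≤ Filter.principal
      (closure ((toWeakSpace ℝ ellInfty) '' (S '' closedBall 0 1))) := by
    rw [hG, Filter.le_principal_iff, Filter.mem_map]
    refine Filter.mem_of_superset Filter.univ_mem (fun k _ => ?_)
    exact subset_closure ⟨S (x k), ⟨x k, mem_closedBall_zero_iff.2 (hx k), rfl⟩, rfl⟩
  obtain ⟨y, hyK, hy⟩ := hKc.exists_clusterPt hGle
  set yv : ellInfty := (toWeakSpace ℝ ellInfty).symm y with hyv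
  have hclus : ∀ ψ : ellInfty →L[ℝ] ℝ, ∀ L : ℝ,
      Tendsto (fun k => ψ (S (x k))) atTop (𝓝 L) → ψ yv = L := by
    intro ψ L hL
    have hcont : Continuous (fun w : WeakSpace ℝ ellInfty =>
        ((topDualPairing ℝ ellInfty).flip) w ψ) := WeakBilin.eval_continuous _ ψ
    have h1 : ClusterPt (((topDualPairing ℝ ellInfty).flip) y ψ)
        (Filter.map (fun w : WeakSpace ℝ ellInfty =>
          ((topDualPairing ℝ ellInfty).flip) w ψ) G) :=
      ClusterPt.map (f := fun w : WeakSpace ℝ ellInfty =>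
        ((topDualPairing ℝ ellInfty).flip) w ψ) hy hcont.continuousAt Filter.tendsto_map
    have h2 : (Filter.map (fun w : WeakSpace ℝ ellInfty =>
        ((topDualPairing ℝ ellInfty).flip) w ψ) G)
        = Filter.map (fun k => ψ (S (x k))) atTop := by
      rw [hG, Filter.map_map]
      rfl
    rw [h2] at h1
    have h3 : (((topDualPairing ℝ ellInfty).flip) y ψ) = ψ yv := rfl
    rw [h3] at h1
    refine eq_of_nhds_neBot (Filter.NeBot.mono h1 ?_)
    exact inf_le_inf_left _ hL
  have hyvm : ∀ m, yv m = Stmt17.ind A m * γ m := by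
    intro m
    refine hclus (Stmt17.coordCLM m) _ ?_
    have h1 : (fun k => Stmt17.coordCLM m (S (x k))) =
        fun k => Stmt17.ind A m * (f m (x k) - g (x k)) := by
      funext k
      rw [Stmt17.coordCLM_apply, hS, heq m k, hT, Stmt17.opT_apply,
        ContinuousLinearMap.sub_apply]
    rw [h1]
    exact (hconvm m).const_mul _
  have hφy : Stmt17.uLim U yv = 0 := by
    refine hclus (Stmt17.uLimCLM U) 0 ?_
    have h1 : (fun k => Stmt17.uLimCLM U (S (x k))) = fun _ => (0:ℝ) :=
      funext (fun k => hφz k)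
    rw [h1]
    exact tendsto_const_nhds
  have h5 : Tendsto (fun m => yv m) (U : Filter ℕ) (𝓝 0) := by
    have h := Stmt17.uLim_tendsto U yv
    rwa [hφy] at h
  have h6 : Tendsto γ (U : Filter ℕ) (𝓝 0) := by
    refine h5.congr' (Filter.eventuallyEq_of_mem hUA (fun m hm => ?_))
    show yv m = γ m
    rw [hyvm m, Stmt17.ind_apply_mem hm, one_mul]
  have h7 : (0:ℝ) ∈ {t : ℝ | ε ≤ |t|} := by
    refine IsClosed.mem_of_tendsto ?_ h6 (Filter.Eventually.of_forall (fun m => hgap m))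
    exact isClosed_le continuous_const continuous_abs
  have h8 : ε ≤ 0 := by simpa using h7
  linarith
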